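/- Let K be a compact metric space, F : K → ℝ bounded, δ > 0, and m ∈ ℕ. Define K₀(F,δ) = K and K_{α+1}(F,δ) = {k ∈ K_α(F,δ) : the oscillation of F restricted to K_α(F,δ) at k is ≥ δ}. If K_m(F,δ) ≠ ∅, then for every sequence (gₙ) ⊆ C(K) converging pointwise to F with g₀ ≡ 0, there exist a point k ∈ K and indices n₁ < n₂ < ⋯ < n_{m+1} such that |g_{n_{i+1}}(k) − g_{n_i}(k)| > δ/4 for all 1 ≤ i ≤ m. Consequently sup_k Σₙ |g_{n+1}(k) − gₙ(k)| ≥ mδ/4. -/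

import Mathlib

open Filter

/-- The oscillation of `F` restricted to `L` at `x` is at least `δ`. -/
def oscGE {K : Type*} [TopologicalSpace K] (F : K → ℝ) (L : Set K) (x : K) (δ : ℝ) : Prop :=
  ∀ U ∈ nhds x, ∀ η < δ, ∃ y ∈ L ∩ U, ∃ z ∈ L ∩ U, η < F y - F z

/-- The oscillation derived sets `K_α(F, δ)` (finite stages). -/
def oscDerivedSet {K : Type*} [TopologicalSpace K] (F : K → ℝ) (δ : ℝ) : ℕ → Set K
  | 0 => Set.univ
  | n + 1 => {x ∈ oscDerivedSet F δ n | oscGE F (oscDerivedSet F δ n) x δ}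

lemma aux_osc {K : Type*} [MetricSpace K] (F : K → ℝ) (δ : ℝ) (hδ : 0 < δ)
    (g : ℕ → K → ℝ) (hg : ∀ n, Continuous (g n))
    (hlim : ∀ k, Tendsto (fun n => g n k) atTop (nhds (F k))) :
    ∀ j : ℕ, ∀ x ∈ oscDerivedSet F δ j, ∀ n : ℕ, ∀ U ∈ nhds x,
      ∃ y ∈ U, ∃ ns : Fin (j+1) → ℕ, ns 0 = n ∧ StrictMono ns ∧
        ∀ i : Fin j, δ/4 < |g (ns i.succ) y - g (ns i.castSucc) y| := by
  intro j
  induction j with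
  | zero =>
    intro x hx n U hU
    exact ⟨x, mem_of_mem_nhds hU, fun _ => n, rfl, fun a b h => absurd (Fin.fin_one_eq_zero a ▸ Fin.fin_one_eq_zero b ▸ h) (lt_irrefl _),
      fun i => i.elim0⟩
  | succ j ih =>
    intro x hx n U hU
    obtain ⟨hx1, hx2⟩ := hx
    -- neighborhood where g n varies little
    obtain ⟨ε, hε, hball⟩ := Metric.continuousAt_iff.mp ((hg n).continuousAt (x := x))
      (δ/8) (by positivity)
    obtain ⟨t, htU, htopen, hxt⟩ := mem_nhds_iff.mp hU
    set O := t ∩ Metric.ball x ε with hO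
    have hOopen : IsOpen O := htopen.inter Metric.isOpen_ball
    have hxO : x ∈ O := ⟨hxt, Metric.mem_ball_self hε⟩
    -- use the oscillation at x
    obtain ⟨y, ⟨hyK, hyO⟩, z, ⟨hzK, hzO⟩, hyz⟩ :=
      hx2 O (hOopen.mem_nhds hxO) (3*δ/4) (by linarith)
    -- one of y, z has |F w - g n w| > δ/4
    have hgy : |g n y - g n x| < δ/8 := by
      have := hball hyO.2; rwa [Real.dist_eq] at this
    have hgz : |g n z - g n x| < δ/8 := by
      have := hball hzO.2; rwa [Real.dist_eq] at this
    have hcases : δ/4 < |F y - g n y| ∨ δ/4 < |F z - g n z| := by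
      rcases le_or_gt (F y - g n y) (δ/4) with h1 | h1
      · right
        have : δ/4 < g n z - F z := by
          rcases abs_lt.mp hgy with ⟨a1, a2⟩
          rcases abs_lt.mp hgz with ⟨b1, b2⟩
          linarith
        calc δ/4 < g n z - F z := this
          _ ≤ |F z - g n z| := by rw [abs_sub_comm]; exact le_abs_self _
      · left
        exact lt_of_lt_of_le h1 (le_abs_self _)
    obtain ⟨w, hwK, hwO, hw⟩ : ∃ w, w ∈ oscDerivedSet F δ j ∧ w ∈ O ∧ δ/4 < |F w - g n w| := by
      rcases hcases with h | h
      · exact ⟨y, hyK, hyO, h⟩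
      · exact ⟨z, hzK, hzO, h⟩
    -- find n' > n with big jump at w
    obtain ⟨N, hN⟩ := Metric.tendsto_atTop.mp (hlim w) (|F w - g n w| - δ/4) (by linarith)
    set n' := max N (n+1) with hn'
    have hn'N : dist (g n' w) (F w) < |F w - g n w| - δ/4 := hN n' (le_max_left _ _)
    have hjumpw : δ/4 < |g n' w - g n w| := by
      have h1 : F w - g n w = (g n' w - g n w) + (F w - g n' w) := by ring
      have h2 : |F w - g n w| ≤ |g n' w - g n w| + |F w - g n' w| := by
        rw [h1]; exact abs_add_le _ _
      have h3 : |F w - g n' w| = dist (g n' w) (F w) := by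
        rw [Real.dist_eq, abs_sub_comm]
      linarith
    -- neighborhood of w where jump persists, inside O
    set s : Set K := {y | δ/4 < |g n' y - g n y|} with hs
    have hsopen : IsOpen s :=
      isOpen_lt continuous_const (((hg n').sub (hg n)).abs)
    have hW : O ∩ s ∈ nhds w := (hOopen.inter hsopen).mem_nhds ⟨hwO, hjumpw⟩
    obtain ⟨y', ⟨hy'O, hy's⟩, ns, hns0, hnsmono, hjumps⟩ := ih w hwK n' (O ∩ s) hW
    refine ⟨y', htU hy'O.1, Fin.cons n ns, Fin.cons_zero _ _, ?_, ?_⟩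
    · rw [Fin.strictMono_iff_lt_succ]
      intro i
      induction i using Fin.cases with
      | zero =>
        simp only [Fin.castSucc_zero, Fin.cons_zero, Fin.succ_zero_eq_one]
        have : (1 : Fin (j+2)) = (0 : Fin (j+1)).succ := rfl
        rw [this, Fin.cons_succ, hns0]
        omega
      | succ i =>
        rw [← Fin.succ_castSucc, Fin.cons_succ, Fin.cons_succ]
        exact hnsmono (Fin.castSucc_lt_succ : i.castSucc < i.succ)
    · intro i
      induction i using Fin.cases with
      | zero =>
        simp only [Fin.castSucc_zero, Fin.cons_zero, Fin.succ_zero_eq_one]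
        have : (1 : Fin (j+2)) = (0 : Fin (j+1)).succ := rfl
        rw [this, Fin.cons_succ, hns0]
        exact hy's
      | succ i =>
        rw [← Fin.succ_castSucc, Fin.cons_succ, Fin.cons_succ]
        exact hjumps i

/-- If `K_m(F,δ) ≠ ∅` then every sequence `(gₙ) ⊆ C(K)`, `g₀ ≡ 0`,
converging pointwise to `F` admits a point `k` and indices `n₁ < ⋯ < n_{m+1}` with
`|g_{n_{i+1}}(k) − g_{n_i}(k)| > δ/4` for `1 ≤ i ≤ m`; consequently
`sup_k Σₙ |g_{n+1}(k) − gₙ(k)| ≥ mδ/4`. -/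
theorem stmt4 {K : Type*} [MetricSpace K] [CompactSpace K] (F : K → ℝ)
    (hFbd : ∃ C : ℝ, ∀ k, |F k| ≤ C) (δ : ℝ) (hδ : 0 < δ) (m : ℕ)
    (hne : (oscDerivedSet F δ m).Nonempty)
    (g : ℕ → K → ℝ) (hg : ∀ n, Continuous (g n)) (hg0 : g 0 = 0)
    (hlim : ∀ k, Tendsto (fun n => g n k) atTop (nhds (F k))) :
    (∃ (k : K) (ns : Fin (m+1) → ℕ), StrictMono ns ∧
      ∀ i : Fin m, δ / 4 < |g (ns i.succ) k - g (ns i.castSucc) k|) ∧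
    ∀ C : ℝ, (∀ (k : K) (N : ℕ), ∑ n ∈ Finset.range N, |g (n+1) k - g n k| ≤ C) →
      (m : ℝ) * δ / 4 ≤ C := by
  obtain ⟨x, hx⟩ := hne
  obtain ⟨k, -, ns, -, hmono, hjump⟩ :=
    aux_osc F δ hδ g hg hlim m x hx 0 Set.univ Filter.univ_mem
  refine ⟨⟨k, ns, hmono, hjump⟩, ?_⟩
  intro C hC
  set d : ℕ → ℝ := fun n => |g (n+1) k - g n k| with hd
  have hd0 : ∀ n ∈ Finset.range (ns (Fin.last m) + 1), 0 ≤ d n := fun n _ => abs_nonneg _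
  have tele : ∀ a b : ℕ, a ≤ b → |g b k - g a k| ≤ ∑ n ∈ Finset.Ico a b, d n := by
    intro a b hab
    have h1 : g b k - g a k = ∑ n ∈ Finset.Ico a b, (g (n+1) k - g n k) := by
      rw [Finset.sum_Ico_eq_sub _ hab, Finset.sum_range_sub (fun n => g n k),
        Finset.sum_range_sub (fun n => g n k)]
      ring
    rw [h1]
    exact Finset.abs_sum_le_sum_abs _ _
  have key : ∀ i : Fin m,
      δ/4 ≤ ∑ n ∈ Finset.Ico ((ns i.castSucc) : ℕ) (ns i.succ), d n := fun i =>
    le_trans (le_of_lt (hjump i)) (tele _ _ (le_of_lt (hmono (Fin.castSucc_lt_succ : i.castSucc < i.succ))))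
  have hdisj : (↑(Finset.univ : Finset (Fin m)) : Set (Fin m)).PairwiseDisjoint
      (fun i : Fin m => Finset.Ico ((ns i.castSucc) : ℕ) (ns i.succ)) := by
    intro i _ j _ hij
    have hkey : ∀ a b : Fin m, a < b → Disjoint (Finset.Ico ((ns a.castSucc):ℕ) (ns a.succ))
        (Finset.Ico ((ns b.castSucc):ℕ) (ns b.succ)) := by
      intro a b hab
      have h1 : ns a.succ ≤ ns b.castSucc := hmono.monotone (Fin.succ_le_castSucc_iff.mpr hab)
      rw [Finset.disjoint_left]
      intro n hn1 hn2
      rw [Finset.mem_Ico] at hn1 hn2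
      omega
    rcases lt_or_gt_of_ne hij with h | h
    · exact hkey i j h
    · exact (hkey j i h).symm
  have hsub : Finset.univ.biUnion
      (fun i : Fin m => Finset.Ico ((ns i.castSucc) : ℕ) (ns i.succ)) ⊆
      Finset.range (ns (Fin.last m) + 1) := by
    intro n hn
    rw [Finset.mem_biUnion] at hn
    obtain ⟨i, -, hi⟩ := hn
    rw [Finset.mem_Ico] at hi
    have : ns i.succ ≤ ns (Fin.last m) := hmono.monotone (Fin.le_last _)
    rw [Finset.mem_range]
    omega
  calc (m : ℝ) * δ / 4 = ∑ _i : Fin m, δ/4 := by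
        rw [Finset.sum_const, Finset.card_univ, Fintype.card_fin, nsmul_eq_mul]; ring
    _ ≤ ∑ i : Fin m, ∑ n ∈ Finset.Ico ((ns i.castSucc) : ℕ) (ns i.succ), d n :=
        Finset.sum_le_sum (fun i _ => key i)
    _ = ∑ n ∈ Finset.univ.biUnion
          (fun i : Fin m => Finset.Ico ((ns i.castSucc) : ℕ) (ns i.succ)), d n :=
        (Finset.sum_biUnion hdisj).symm
    _ ≤ ∑ n ∈ Finset.range (ns (Fin.last m) + 1), d n :=
        Finset.sum_le_sum_of_subset_of_nonneg hsub (fun n hn _ => hd0 n hn)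
    _ ≤ C := hC k _
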